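/- Let d ≥ 1, p, q, r ∈ (0,∞] and r₁ ∈ (0, min(p,q,r)]. For a measurable function F: ℝ^d × ℝ^d → ℂ define b(j,ι) = ess sup_{ξ∈ι+[0,2π]^d} ‖F(·,ξ)‖_{L^r(j+[0,1]^d)} and c(j,ι) = ‖F‖_{L^{r₁}((j+[0,1]^d)×(ι+[0,2π]^d))} for j ∈ ℤ^d, ι ∈ 2πℤ^d, and g(ξ) = ‖(‖F(·,ξ)‖_{L^r(j+[0,1]^d)})_{j∈ℤ^d}‖_{ℓ^p}. Then there exist constants C₁, C₂ > 0, independent of F, such that ‖g‖_{L^q(ℝ^d)} ≤ C₁·‖(‖(b(j,ι))_{j∈ℤ^d}‖_{ℓ^p})_{ι∈2πℤ^d}‖_{ℓ^q} and ‖(‖(c(j,ι))_{j∈ℤ^d}‖_{ℓ^p})_{ι∈2πℤ^d}‖_{ℓ^q} ≤ C₂·‖g‖_{L^q(ℝ^d)}; all quantities may be +∞. -/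

import Mathlib

open MeasureTheory Complex Real
open scoped InnerProductSpace ENNReal

noncomputable section

/-- `ℝ^d` as a Euclidean space. -/
abbrev Ed (d : ℕ) := EuclideanSpace ℝ (Fin d)

/-- The unit cell `j + [0,1]^d ⊆ ℝ^d`. -/
def cell (d : ℕ) (j : Fin d → ℤ) : Set (Ed d) :=
  {x | ∀ i, x i ∈ Set.Icc (j i : ℝ) (j i + 1)}

/-- The cell `2πι + [0,2π]^d ⊆ ℝ^d`, `ι ∈ ℤ^d`. -/
def cell2pi (d : ℕ) (ι : Fin d → ℤ) : Set (Ed d) :=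
  {x | ∀ i, x i ∈ Set.Icc (2*π*(ι i)) (2*π*(ι i) + 2*π)}

/-- The `ℓ^p` quasi-norm of an `ℝ≥0∞`-valued sequence, `p ∈ (0,∞]`. -/
def lpSeq {ι : Type*} (p : ℝ≥0∞) (a : ι → ℝ≥0∞) : ℝ≥0∞ :=
  if p = ∞ then ⨆ j, a j else (∑' j, a j ^ p.toReal) ^ (1 / p.toReal)

/-- The `L^p` quasi-norm of an `ℝ≥0∞`-valued function, `p ∈ (0,∞]`. -/
def lpENN {α : Type*} [MeasurableSpace α] (p : ℝ≥0∞) (μ : Measure α) (g : α → ℝ≥0∞) : ℝ≥0∞ :=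
  if p = ∞ then essSup g μ else (∫⁻ x, g x ^ p.toReal ∂μ) ^ (1 / p.toReal)

namespace Stmt11Aux

variable {d : ℕ}

/-- closed lattice cell of side `L` -/
def ccell (d : ℕ) (L : ℝ) (ι : Fin d → ℤ) : Set (Ed d) :=
  {x | ∀ i, x i ∈ Set.Icc (L * ι i) (L * ι i + L)}

/-- half-open lattice cell of side `L` -/
def hcell (d : ℕ) (L : ℝ) (ι : Fin d → ℤ) : Set (Ed d) :=
  {x | ∀ i, x i ∈ Set.Ico (L * ι i) (L * ι i + L)}

lemma cell_eq_ccell (j : Fin d → ℤ) : cell d j = ccell d 1 j := by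
  ext x; simp [cell, ccell]

lemma cell2pi_eq_ccell (ι : Fin d → ℤ) : cell2pi d ι = ccell d (2*π) ι := rfl

lemma measurable_eval (i : Fin d) : Measurable fun x : Ed d => x i :=
  (measurable_pi_apply i).comp ((MeasurableEquiv.toLp 2 (Fin d → ℝ)).symm).measurable

lemma measurableSet_ccell (L : ℝ) (ι : Fin d → ℤ) : MeasurableSet (ccell d L ι) := by
  rw [ccell, Set.setOf_forall]
  exact MeasurableSet.iInter fun i => (measurable_eval i) measurableSet_Icc

lemma measurableSet_hcell (L : ℝ) (ι : Fin d → ℤ) : MeasurableSet (hcell d L ι) := by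
  rw [hcell, Set.setOf_forall]
  exact MeasurableSet.iInter fun i => (measurable_eval i) measurableSet_Ico

lemma hcell_subset (L : ℝ) (ι : Fin d → ℤ) : hcell d L ι ⊆ ccell d L ι :=
  fun x hx i => ⟨(hx i).1, ((hx i).2).le⟩

lemma volume_ccell {L : ℝ} (hL : 0 ≤ L) (ι : Fin d → ℤ) :
    volume (ccell d L ι) = ENNReal.ofReal (L ^ d) := by
  have h : ccell d L ι = ((MeasurableEquiv.toLp 2 (Fin d → ℝ)).symm) ⁻¹'
      (Set.pi Set.univ fun i => Set.Icc (L * ι i) (L * ι i + L)) := by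
    ext x; simp [ccell, Set.mem_pi, MeasurableEquiv.coe_toLp_symm, Pi.le_def, forall_and,
      Set.pi_univ_Icc]
  rw [h, (EuclideanSpace.volume_preserving_symm_measurableEquiv_toLp (Fin d)).measure_preimage
    (by exact (MeasurableSet.univ_pi fun i => measurableSet_Icc).nullMeasurableSet)]
  rw [Set.pi_univ_Icc, Real.volume_Icc_pi]
  simp only [add_sub_cancel_left, Finset.prod_const, Finset.card_univ, Fintype.card_fin]
  rw [← ENNReal.ofReal_pow hL]

lemma volume_hcell {L : ℝ} (hL : 0 ≤ L) (ι : Fin d → ℤ) :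
    volume (hcell d L ι) = ENNReal.ofReal (L ^ d) := by
  have h : hcell d L ι = ((MeasurableEquiv.toLp 2 (Fin d → ℝ)).symm) ⁻¹'
      (Set.pi Set.univ fun i => Set.Ico (L * ι i) (L * ι i + L)) := by
    ext x; simp [hcell, Set.mem_pi, MeasurableEquiv.coe_toLp_symm]
  rw [h, (EuclideanSpace.volume_preserving_symm_measurableEquiv_toLp (Fin d)).measure_preimage
    (by exact (MeasurableSet.univ_pi fun i => measurableSet_Ico).nullMeasurableSet)]
  rw [Real.volume_pi_Ico]
  simp only [add_sub_cancel_left, Finset.prod_const, Finset.card_univ, Fintype.card_fin]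
  rw [← ENNReal.ofReal_pow hL]

lemma ccell_ae_eq_hcell {L : ℝ} (hL : 0 < L) (ι : Fin d → ℤ) :
    ccell d L ι =ᵐ[volume] hcell d L ι := by
  refine (ae_eq_of_subset_of_measure_ge (hcell_subset L ι) ?_
    (measurableSet_hcell L ι).nullMeasurableSet ?_).symm
  · rw [volume_ccell hL.le, volume_hcell hL.le]
  · rw [volume_ccell hL.le]; exact ENNReal.ofReal_ne_top

lemma mem_hcell_iff {L : ℝ} (hL : 0 < L) {x : Ed d} {ι : Fin d → ℤ} :
    x ∈ hcell d L ι ↔ ∀ i, ι i = ⌊x i / L⌋ := by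
  constructor
  · intro hx i
    have h1 := (hx i).1
    have h2 := (hx i).2
    have : (ι i : ℝ) ≤ x i / L ∧ x i / L < ι i + 1 := by
      constructor
      · rw [le_div_iff₀ hL]; linarith [h1]
      · rw [div_lt_iff₀ hL]; push_cast; linarith [h2]
    exact (Int.floor_eq_iff.mpr this).symm
  · intro h i
    have h1 : (⌊x i / L⌋ : ℝ) ≤ x i / L := Int.floor_le _
    have h2 : x i / L < ⌊x i / L⌋ + 1 := Int.lt_floor_add_one _
    rw [h i]
    have h3 := (le_div_iff₀ hL).mp h1
    have h4 := (div_lt_iff₀ hL).mp h2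
    constructor
    · nlinarith
    · nlinarith

lemma iUnion_hcell {L : ℝ} (hL : 0 < L) : (⋃ ι : Fin d → ℤ, hcell d L ι) = Set.univ := by
  ext x
  simp only [Set.mem_iUnion, Set.mem_univ, iff_true]
  exact ⟨fun i => ⌊x i / L⌋, (mem_hcell_iff hL).mpr fun i => rfl⟩

lemma pairwise_disjoint_hcell {L : ℝ} (hL : 0 < L) :
    Pairwise (Function.onFun Disjoint fun ι : Fin d → ℤ => hcell d L ι) := by
  intro ι κ hne
  rw [Function.onFun, Set.disjoint_left]
  intro x hx hx'
  exact hne (funext fun i => ((mem_hcell_iff hL).mp hx i).trans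
    (((mem_hcell_iff hL).mp hx' i).symm))

lemma volume_eq_sum_restrict {L : ℝ} (hL : 0 < L) :
    (volume : Measure (Ed d)) = Measure.sum fun ι : Fin d → ℤ =>
      volume.restrict (ccell d L ι) := by
  conv_lhs => rw [← Measure.restrict_univ (μ := (volume : Measure (Ed d))),
    ← iUnion_hcell hL, Measure.restrict_iUnion (pairwise_disjoint_hcell hL)
      (fun ι => measurableSet_hcell L ι)]
  congr 1
  ext1 ι
  exact (Measure.restrict_congr_set (ccell_ae_eq_hcell hL ι)).symm

lemma lintegral_eq_tsum {L : ℝ} (hL : 0 < L) (f : Ed d → ℝ≥0∞) :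
    ∫⁻ x, f x = ∑' ι : Fin d → ℤ, ∫⁻ x in ccell d L ι, f x := by
  conv_lhs => rw [volume_eq_sum_restrict hL]
  exact lintegral_sum_measure f _

lemma ae_of_forall_ae_restrict {L : ℝ} (hL : 0 < L) {P : Ed d → Prop}
    (h : ∀ ι : Fin d → ℤ, ∀ᵐ x ∂volume.restrict (ccell d L ι), P x) :
    ∀ᵐ x ∂(volume : Measure (Ed d)), P x := by
  rw [volume_eq_sum_restrict hL, Measure.ae_sum_eq, Filter.eventually_iSup]
  exact h


variable {α : Type*} [MeasurableSpace α] {μ : Measure α}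

lemma lpSeq_mono' {ι : Type*} (p : ℝ≥0∞) {a b : ι → ℝ≥0∞} (h : ∀ j, a j ≤ b j) :
    lpSeq p a ≤ lpSeq p b := by
  rw [lpSeq, lpSeq]
  split
  · exact iSup_mono h
  · exact ENNReal.rpow_le_rpow (ENNReal.tsum_le_tsum fun j =>
      ENNReal.rpow_le_rpow (h j) ENNReal.toReal_nonneg) (by positivity)

/-- binary reverse Minkowski -/
lemma rpow_add_rpow_le_lintegral {σ : ℝ} (hσ : 1 < σ) {f g : α → ℝ≥0∞}
    (hf : Measurable f) (hg : Measurable g) :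
    ((∫⁻ x, f x ∂μ) ^ σ + (∫⁻ x, g x ∂μ) ^ σ) ^ (1/σ) ≤
      ∫⁻ x, (f x ^ σ + g x ^ σ) ^ (1/σ) ∂μ := by
  have hσ0 : (0:ℝ) < σ := by linarith
  have hσ0' : σ ≠ 0 := hσ0.ne'
  have hconj : σ.HolderConjugate (Real.conjExponent σ) := Real.HolderConjugate.conjExponent hσ
  set σ' := Real.conjExponent σ with hσ'def
  have hσ'pos : (0:ℝ) < σ' := hconj.symm.pos
  set A := ∫⁻ x, f x ∂μ with hA
  set B := ∫⁻ x, g x ∂μ with hB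
  set R := ∫⁻ x, (f x ^ σ + g x ^ σ) ^ (1/σ) ∂μ with hR
  have hpt : ∀ (u v : ℝ≥0∞), u ≤ (u ^ σ + v ^ σ) ^ (1/σ) := fun u v => by
    calc u = (u ^ σ) ^ (1/σ) := by
          rw [← ENNReal.rpow_mul, mul_one_div_cancel hσ0', ENNReal.rpow_one]
      _ ≤ (u ^ σ + v ^ σ) ^ (1/σ) := ENNReal.rpow_le_rpow le_self_add (by positivity)
  have hAR : A ≤ R := lintegral_mono fun x => hpt _ _
  have hBR : B ≤ R := lintegral_mono fun x => by
    calc g x ≤ (g x ^ σ + f x ^ σ) ^ (1/σ) := hpt _ _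
      _ = (f x ^ σ + g x ^ σ) ^ (1/σ) := by rw [add_comm]
  by_cases hRtop : R = ∞
  · rw [hRtop]; exact le_top
  have hAtop : A ≠ ∞ := fun h => hRtop (top_le_iff.mp (h ▸ hAR))
  have hBtop : B ≠ ∞ := fun h => hRtop (top_le_iff.mp (h ▸ hBR))
  set la := A ^ (σ - 1) with hla
  set lb := B ^ (σ - 1) with hlb
  have hla_top : la ≠ ∞ := by
    rw [hla]; exact ENNReal.rpow_ne_top_of_nonneg (by linarith) hAtop
  have hlb_top : lb ≠ ∞ := by
    rw [hlb]; exact ENNReal.rpow_ne_top_of_nonneg (by linarith) hBtop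
  have hmulA : la * A = A ^ σ := by
    rcases eq_or_ne A 0 with h0 | h0
    · simp [hla, h0, ENNReal.zero_rpow_of_pos hσ0]
    · rw [hla, show A ^ (σ-1) * A = A ^ (σ-1) * A ^ (1:ℝ) by rw [ENNReal.rpow_one],
        ← ENNReal.rpow_add _ _ h0 hAtop]
      norm_num
  have hmulB : lb * B = B ^ σ := by
    rcases eq_or_ne B 0 with h0 | h0
    · simp [hlb, h0, ENNReal.zero_rpow_of_pos hσ0]
    · rw [hlb, show B ^ (σ-1) * B = B ^ (σ-1) * B ^ (1:ℝ) by rw [ENNReal.rpow_one],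
        ← ENNReal.rpow_add _ _ h0 hBtop]
      norm_num
  have hlaσ' : la ^ σ' = A ^ σ := by
    rw [hla, ← ENNReal.rpow_mul, Real.HolderConjugate.sub_one_mul_conj hconj]
  have hlbσ' : lb ^ σ' = B ^ σ := by
    rw [hlb, ← ENNReal.rpow_mul, Real.HolderConjugate.sub_one_mul_conj hconj]
  -- pointwise Hölder with two terms
  have hpt2 : ∀ x, la * f x + lb * g x ≤
      (la ^ σ' + lb ^ σ') ^ (1/σ') * (f x ^ σ + g x ^ σ) ^ (1/σ) := by
    intro x
    have := ENNReal.inner_le_Lp_mul_Lq (Finset.univ : Finset (Fin 2))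
      (![la, lb]) (![f x, g x]) hconj.symm
    simpa [Fin.sum_univ_two] using this
  have key : A ^ σ + B ^ σ ≤ (A ^ σ + B ^ σ) ^ (1/σ') * R := by
    calc A ^ σ + B ^ σ = la * A + lb * B := by rw [hmulA, hmulB]
      _ = ∫⁻ x, (la * f x + lb * g x) ∂μ := by
          rw [lintegral_add_left (hf.const_mul la), lintegral_const_mul la hf,
            lintegral_const_mul lb hg]
      _ ≤ ∫⁻ x, (la ^ σ' + lb ^ σ') ^ (1/σ') * (f x ^ σ + g x ^ σ) ^ (1/σ) ∂μ :=
          lintegral_mono hpt2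
      _ = (la ^ σ' + lb ^ σ') ^ (1/σ') * R := by
          have hne : la ^ σ' + lb ^ σ' ≠ ⊤ := by
            simp only [ne_eq, ENNReal.add_eq_top, not_or]
            exact ⟨ENNReal.rpow_ne_top_of_nonneg hσ'pos.le hla_top,
              ENNReal.rpow_ne_top_of_nonneg hσ'pos.le hlb_top⟩
          rw [lintegral_const_mul' _ _
            (ENNReal.rpow_ne_top_of_nonneg (one_div_nonneg.mpr hσ'pos.le) hne)]
      _ = (A ^ σ + B ^ σ) ^ (1/σ') * R := by rw [hlaσ', hlbσ']
  set T := A ^ σ + B ^ σ with hT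
  rcases eq_or_ne T 0 with h0 | h0
  · rw [h0, ENNReal.zero_rpow_of_pos (by positivity)]; exact zero_le
  have hTtop : T ≠ ∞ := by
    rw [hT]
    simp only [ne_eq, ENNReal.add_eq_top, not_or]
    exact ⟨ENNReal.rpow_ne_top_of_nonneg hσ0.le hAtop,
      ENNReal.rpow_ne_top_of_nonneg hσ0.le hBtop⟩
  have hsplit : T = T ^ (1/σ') * T ^ (1/σ) := by
    rw [← ENNReal.rpow_add _ _ h0 hTtop]
    rw [show 1/σ' + 1/σ = 1 by
      rw [one_div, one_div, add_comm]; exact hconj.inv_add_inv_eq_one, ENNReal.rpow_one]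
  have hfac0 : T ^ (1/σ') ≠ 0 :=
    (ENNReal.rpow_pos (pos_iff_ne_zero.mpr h0) hTtop).ne'
  have hfactop : T ^ (1/σ') ≠ ∞ :=
    ENNReal.rpow_ne_top_of_nonneg (one_div_nonneg.mpr hσ'pos.le) hTtop
  nth_rewrite 1 [hsplit] at key
  exact (ENNReal.mul_le_mul_iff_right hfac0 hfactop).mp key

lemma minkowski_finset {J : Type*} (s : Finset J) {σ : ℝ} (hσ : 1 ≤ σ)
    {f : J → α → ℝ≥0∞} (hf : ∀ j, Measurable (f j)) :
    (∑ j ∈ s, (∫⁻ x, f j x ∂μ) ^ σ) ^ (1/σ) ≤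
      ∫⁻ x, (∑ j ∈ s, f j x ^ σ) ^ (1/σ) ∂μ := by
  classical
  rcases eq_or_lt_of_le hσ with h1 | h1
  · subst h1
    simp only [ENNReal.rpow_one, one_div_one]
    exact le_of_eq (lintegral_finset_sum s fun j _ => hf j).symm
  have hσ0 : (0:ℝ) < σ := by linarith
  induction s using Finset.induction_on with
  | empty =>
    simp only [Finset.sum_empty]
    rw [ENNReal.zero_rpow_of_pos (by positivity)]
    exact zero_le
  | @insert a s ha IH =>
    rw [Finset.sum_insert ha]
    have hG : Measurable fun x => (∑ j ∈ s, f j x ^ σ) ^ (1/σ) :=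
      (Finset.measurable_sum s fun j _ => (hf j).pow_const σ).pow_const (1/σ)
    have hIH : ∑ j ∈ s, (∫⁻ x, f j x ∂μ) ^ σ ≤
        (∫⁻ x, (∑ j ∈ s, f j x ^ σ) ^ (1/σ) ∂μ) ^ σ := by
      calc ∑ j ∈ s, (∫⁻ x, f j x ∂μ) ^ σ
          = ((∑ j ∈ s, (∫⁻ x, f j x ∂μ) ^ σ) ^ (1/σ)) ^ σ := by
            rw [← ENNReal.rpow_mul, one_div_mul_cancel hσ0.ne', ENNReal.rpow_one]
        _ ≤ _ := ENNReal.rpow_le_rpow IH hσ0.le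
    calc ((∫⁻ x, f a x ∂μ) ^ σ + ∑ j ∈ s, (∫⁻ x, f j x ∂μ) ^ σ) ^ (1/σ)
        ≤ ((∫⁻ x, f a x ∂μ) ^ σ + (∫⁻ x, (∑ j ∈ s, f j x ^ σ) ^ (1/σ) ∂μ) ^ σ) ^ (1/σ) :=
          ENNReal.rpow_le_rpow (add_le_add_right hIH _) (by positivity)
      _ ≤ ∫⁻ x, (f a x ^ σ + ((∑ j ∈ s, f j x ^ σ) ^ (1/σ)) ^ σ) ^ (1/σ) ∂μ :=
          rpow_add_rpow_le_lintegral h1 (hf a) hG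
      _ = ∫⁻ x, (f a x ^ σ + ∑ j ∈ s, f j x ^ σ) ^ (1/σ) ∂μ := by
          congr 1; funext x
          rw [← ENNReal.rpow_mul, one_div_mul_cancel hσ0.ne', ENNReal.rpow_one]
      _ = ∫⁻ x, (∑ j ∈ insert a s, f j x ^ σ) ^ (1/σ) ∂μ := by
          congr 1; funext x
          rw [Finset.sum_insert ha]

lemma minkowski_tsum {J : Type*} [Countable J] {σ : ℝ} (hσ : 1 ≤ σ)
    {f : J → α → ℝ≥0∞} (hf : ∀ j, Measurable (f j)) :
    (∑' j, (∫⁻ x, f j x ∂μ) ^ σ) ^ (1/σ) ≤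
      ∫⁻ x, (∑' j, f j x ^ σ) ^ (1/σ) ∂μ := by
  have hσ0 : (0:ℝ) < σ := by linarith
  set R := ∫⁻ x, (∑' j, f j x ^ σ) ^ (1/σ) ∂μ with hR
  have hsum : ∀ s : Finset J, ∑ j ∈ s, (∫⁻ x, f j x ∂μ) ^ σ ≤ R ^ σ := by
    intro s
    have h1 : (∑ j ∈ s, (∫⁻ x, f j x ∂μ) ^ σ) ^ (1/σ) ≤ R := by
      refine (minkowski_finset s hσ hf).trans (lintegral_mono fun x => ?_)
      exact ENNReal.rpow_le_rpow (ENNReal.sum_le_tsum s) (by positivity)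
    calc ∑ j ∈ s, (∫⁻ x, f j x ∂μ) ^ σ
        = ((∑ j ∈ s, (∫⁻ x, f j x ∂μ) ^ σ) ^ (1/σ)) ^ σ := by
          rw [← ENNReal.rpow_mul, one_div_mul_cancel hσ0.ne', ENNReal.rpow_one]
      _ ≤ R ^ σ := ENNReal.rpow_le_rpow h1 hσ0.le
  have : ∑' j, (∫⁻ x, f j x ∂μ) ^ σ ≤ R ^ σ := by
    rw [ENNReal.tsum_eq_iSup_sum]; exact iSup_le hsum
  calc (∑' j, (∫⁻ x, f j x ∂μ) ^ σ) ^ (1/σ) ≤ (R ^ σ) ^ (1/σ) :=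
        ENNReal.rpow_le_rpow this (by positivity)
    _ = R := by rw [← ENNReal.rpow_mul, mul_one_div_cancel hσ0.ne', ENNReal.rpow_one]


lemma essSup_eq_iSup_moments (μ : Measure α) [IsProbabilityMeasure μ]
    {h : α → ℝ≥0∞} (hm : Measurable h) :
    essSup h μ = ⨆ n : ℕ, (∫⁻ x, h x ^ ((n:ℝ)+1) ∂μ) ^ (1/((n:ℝ)+1)) := by
  apply le_antisymm
  · -- ≤ : for any c < essSup, c ≤ RHS
    set S := ⨆ n : ℕ, (∫⁻ x, h x ^ ((n:ℝ)+1) ∂μ) ^ (1/((n:ℝ)+1)) with hS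
    by_contra hcon
    push_neg at hcon
    obtain ⟨c, hSc, hc⟩ := exists_between hcon
    have hAne : μ {x | c < h x} ≠ 0 := by
      intro h0
      have : essSup h μ ≤ c := essSup_le_of_ae_le c (by
        rw [Filter.EventuallyLE, ae_iff]
        convert h0 using 2
        ext x
        simp [not_le])
      exact absurd (lt_of_le_of_lt this hc) (lt_irrefl _)
    set A := μ {x | c < h x} with hA
    have hA1 : A ≤ 1 := prob_le_one
    have key : ∀ n : ℕ, c * A ^ (1/((n:ℝ)+1)) ≤ S := by
      intro n
      have e0 : (0:ℝ) < (n:ℝ)+1 := by positivity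
      have hle : c ^ ((n:ℝ)+1) * A ≤ ∫⁻ x, h x ^ ((n:ℝ)+1) ∂μ := by
        have hms : MeasurableSet {x | c < h x} := hm measurableSet_Ioi
        calc c ^ ((n:ℝ)+1) * A = ∫⁻ x in {x | c < h x}, c ^ ((n:ℝ)+1) ∂μ := by
              rw [setLIntegral_const]
          _ ≤ ∫⁻ x in {x | c < h x}, h x ^ ((n:ℝ)+1) ∂μ :=
              setLIntegral_mono (hm.pow_const _) fun x hx =>
                ENNReal.rpow_le_rpow (le_of_lt hx) e0.le
          _ ≤ ∫⁻ x, h x ^ ((n:ℝ)+1) ∂μ := setLIntegral_le_lintegral _ _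
      calc c * A ^ (1/((n:ℝ)+1)) = (c ^ ((n:ℝ)+1) * A) ^ (1/((n:ℝ)+1)) := by
            rw [ENNReal.mul_rpow_of_nonneg _ _ (by positivity), ← ENNReal.rpow_mul,
              mul_one_div_cancel e0.ne', ENNReal.rpow_one]
        _ ≤ (∫⁻ x, h x ^ ((n:ℝ)+1) ∂μ) ^ (1/((n:ℝ)+1)) :=
            ENNReal.rpow_le_rpow hle (by positivity)
        _ ≤ S := le_iSup (fun n : ℕ => (∫⁻ x, h x ^ ((n:ℝ)+1) ∂μ) ^ (1/((n:ℝ)+1))) n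
    have h1le : (1:ℝ≥0∞) ≤ ⨆ n : ℕ, A ^ (1/((n:ℝ)+1)) := by
      rw [le_iSup_iff]
      intro b hb
      by_contra hb1
      push_neg at hb1
      have hA0 : A = 0 := by
        have htend : Filter.Tendsto (fun n : ℕ => b ^ n) Filter.atTop (nhds 0) :=
          ENNReal.tendsto_pow_atTop_nhds_zero_of_lt_one hb1
        refine le_antisymm (ge_of_tendsto htend ?_) zero_le
        filter_upwards [Filter.eventually_ge_atTop 1] with n hn
        rcases Nat.exists_eq_add_of_le hn with ⟨m, rfl⟩
        have := hb m
        calc A = (A ^ (1/((m:ℝ)+1))) ^ ((m:ℝ)+1) := by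
              rw [← ENNReal.rpow_mul, one_div_mul_cancel (by positivity), ENNReal.rpow_one]
          _ ≤ b ^ ((m:ℝ)+1) := ENNReal.rpow_le_rpow this (by positivity)
          _ = b ^ (1 + m) := by
              rw [show ((m:ℝ)+1) = ((1+m : ℕ):ℝ) by push_cast; ring, ENNReal.rpow_natCast]
      exact hAne hA0
    have : c ≤ S := by
      calc c = c * 1 := (mul_one c).symm
        _ ≤ c * ⨆ n : ℕ, A ^ (1/((n:ℝ)+1)) := mul_le_mul_right h1le c
        _ = ⨆ n : ℕ, c * A ^ (1/((n:ℝ)+1)) := by rw [ENNReal.mul_iSup]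
        _ ≤ S := iSup_le key
    exact absurd (lt_of_le_of_lt this hSc) (lt_irrefl _)
  · refine iSup_le fun n => ?_
    have e0 : (0:ℝ) < (n:ℝ)+1 := by positivity
    calc (∫⁻ x, h x ^ ((n:ℝ)+1) ∂μ) ^ (1/((n:ℝ)+1))
        ≤ (∫⁻ _, (essSup h μ) ^ ((n:ℝ)+1) ∂μ) ^ (1/((n:ℝ)+1)) := by
          refine ENNReal.rpow_le_rpow (lintegral_mono_ae ?_) (by positivity)
          filter_upwards [ENNReal.ae_le_essSup h] with x hx
          exact ENNReal.rpow_le_rpow hx e0.le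
      _ = essSup h μ := by
          rw [lintegral_const, measure_univ, mul_one, ← ENNReal.rpow_mul,
            mul_one_div_cancel e0.ne', ENNReal.rpow_one]


lemma measurable_eLpNorm_param {s : Set (Ed d)} (hvol : volume s = 1) (r : ℝ≥0∞)
    {F : Ed d × Ed d → ℂ} (hF : Measurable F) :
    Measurable fun ξ : Ed d => eLpNorm (fun x => F (x, ξ)) r (volume.restrict s) := by
  rcases eq_or_ne r 0 with rfl | hr0
  · simp only [eLpNorm_exponent_zero]
    exact measurable_const
  rcases eq_or_ne r ∞ with rfl | hrtop
  · haveI : IsProbabilityMeasure (volume.restrict s) :=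
      ⟨by rw [Measure.restrict_apply_univ]; exact hvol⟩
    have hsec : ∀ ξ : Ed d, Measurable fun x => F (x, ξ) := fun ξ =>
      hF.comp (measurable_id.prodMk measurable_const)
    have heq : (fun ξ : Ed d => eLpNorm (fun x => F (x, ξ)) ∞ (volume.restrict s)) =
        fun ξ => ⨆ n : ℕ,
          (∫⁻ x, (‖F (x, ξ)‖₊ : ℝ≥0∞) ^ ((n:ℝ)+1) ∂(volume.restrict s)) ^ (1/((n:ℝ)+1)) := by
      funext ξ
      rw [eLpNorm_exponent_top, eLpNormEssSup]
      exact essSup_eq_iSup_moments _ ((hsec ξ).nnnorm.coe_nnreal_ennreal)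
    rw [heq]
    refine Measurable.iSup fun n => Measurable.pow_const ?_ _
    exact Measurable.lintegral_prod_left
      ((hF.nnnorm.coe_nnreal_ennreal).pow_const _)
  · have heq : (fun ξ : Ed d => eLpNorm (fun x => F (x, ξ)) r (volume.restrict s)) =
        fun ξ => (∫⁻ x, (‖F (x, ξ)‖₊ : ℝ≥0∞) ^ r.toReal ∂(volume.restrict s)) ^ (1/r.toReal) := by
      funext ξ
      exact eLpNorm_eq_lintegral_rpow_enorm_toReal hr0 hrtop
    rw [heq]
    refine Measurable.pow_const ?_ _
    exact Measurable.lintegral_prod_left ((hF.nnnorm.coe_nnreal_ennreal).pow_const _)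

lemma measurable_lpSeq_param {J : Type*} [Countable J] (p : ℝ≥0∞)
    {a : J → Ed d → ℝ≥0∞} (ha : ∀ j, Measurable (a j)) :
    Measurable fun ξ => lpSeq p (fun j => a j ξ) := by
  unfold lpSeq
  split
  · exact Measurable.iSup ha
  · exact (Measurable.ennreal_tsum fun j => (ha j).pow_const _).pow_const _


lemma part1 (d : ℕ) (p q r : ℝ≥0∞) (hq : 0 < q) (F : Ed d × Ed d → ℂ) :
    lpENN q volume (fun ξ : Ed d => lpSeq p (fun j : Fin d → ℤ =>
        eLpNorm (fun x => F (x, ξ)) r (volume.restrict (cell d j))))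
      ≤ ENNReal.ofReal (max 1 ((2*π) ^ ((d:ℝ) / q.toReal))) *
        lpSeq q (fun ι : Fin d → ℤ => lpSeq p (fun j : Fin d → ℤ =>
          essSup (fun ξ : Ed d => eLpNorm (fun x => F (x, ξ)) r (volume.restrict (cell d j)))
            (volume.restrict (cell2pi d ι)))) := by
  set a : (Fin d → ℤ) → Ed d → ℝ≥0∞ :=
    fun j ξ => eLpNorm (fun x => F (x, ξ)) r (volume.restrict (cell d j)) with ha_def
  set g : Ed d → ℝ≥0∞ := fun ξ => lpSeq p (fun j => a j ξ) with hg_def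
  set b : (Fin d → ℤ) → (Fin d → ℤ) → ℝ≥0∞ :=
    fun j ι => essSup (fun ξ => a j ξ) (volume.restrict (cell2pi d ι)) with hb_def
  set B : (Fin d → ℤ) → ℝ≥0∞ := fun ι => lpSeq p (fun j => b j ι) with hB_def
  have hCbig : (1:ℝ≥0∞) ≤ ENNReal.ofReal (max 1 ((2*π) ^ ((d:ℝ) / q.toReal))) := by
    rw [← ENNReal.ofReal_one]
    exact ENNReal.ofReal_le_ofReal (le_max_left _ _)
  have h1 : ∀ ι : Fin d → ℤ, ∀ᵐ ξ ∂(volume.restrict (cell2pi d ι)), g ξ ≤ B ι := by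
    intro ι
    have := ae_all_iff.mpr fun j : Fin d → ℤ =>
      ENNReal.ae_le_essSup (μ := volume.restrict (cell2pi d ι)) (fun ξ => a j ξ)
    exact this.mono fun ξ hξ => lpSeq_mono' p hξ
  rcases eq_or_ne q ∞ with rfl | hqtop
  · rw [lpENN, if_pos rfl]
    have h2 : essSup g volume ≤ ⨆ ι : Fin d → ℤ, B ι := by
      refine essSup_le_of_ae_le _ ?_
      refine ae_of_forall_ae_restrict Real.two_pi_pos (fun ι => ?_)
      exact (h1 ι).mono fun ξ hξ => hξ.trans (le_iSup B ι)
    refine h2.trans ?_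
    rw [show lpSeq (⊤:ℝ≥0∞) B = ⨆ ι, B ι from if_pos rfl]
    exact le_mul_of_one_le_left' hCbig
  · have hq' : 0 < q.toReal := ENNReal.toReal_pos hq.ne' hqtop
    rw [lpENN, if_neg hqtop, show lpSeq q B = (∑' ι, B ι ^ q.toReal) ^ (1/q.toReal) from
      if_neg hqtop]
    have hK : ∀ ι : Fin d → ℤ, ∫⁻ ξ in cell2pi d ι, g ξ ^ q.toReal
        ≤ B ι ^ q.toReal * ENNReal.ofReal ((2*π)^d) := by
      intro ι
      calc ∫⁻ ξ in cell2pi d ι, g ξ ^ q.toReal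
          ≤ ∫⁻ _ in cell2pi d ι, B ι ^ q.toReal := lintegral_mono_ae
            ((h1 ι).mono fun ξ hξ => ENNReal.rpow_le_rpow hξ hq'.le)
        _ = B ι ^ q.toReal * volume (cell2pi d ι) := setLIntegral_const _ _
        _ = B ι ^ q.toReal * ENNReal.ofReal ((2*π)^d) := by
            rw [cell2pi_eq_ccell, volume_ccell Real.two_pi_pos.le]
    calc (∫⁻ ξ, g ξ ^ q.toReal) ^ (1/q.toReal)
        = (∑' ι : Fin d → ℤ, ∫⁻ ξ in ccell d (2*π) ι, g ξ ^ q.toReal) ^ (1/q.toReal) := by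
          rw [← lintegral_eq_tsum Real.two_pi_pos]
      _ ≤ ((∑' ι : Fin d → ℤ, B ι ^ q.toReal) * ENNReal.ofReal ((2*π)^d)) ^ (1/q.toReal) := by
          rw [← ENNReal.tsum_mul_right]
          exact ENNReal.rpow_le_rpow (ENNReal.tsum_le_tsum fun ι => hK ι) (by positivity)
      _ = (∑' ι : Fin d → ℤ, B ι ^ q.toReal) ^ (1/q.toReal) *
            (ENNReal.ofReal ((2*π)^d)) ^ (1/q.toReal) :=
          ENNReal.mul_rpow_of_nonneg _ _ (by positivity)
      _ ≤ (∑' ι : Fin d → ℤ, B ι ^ q.toReal) ^ (1/q.toReal) *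
            ENNReal.ofReal (max 1 ((2*π) ^ ((d:ℝ) / q.toReal))) := by
          refine mul_le_mul_right ?_ _
          rw [ENNReal.ofReal_rpow_of_pos (by positivity)]
          refine ENNReal.ofReal_le_ofReal (le_max_of_le_right ?_)
          rw [← Real.rpow_natCast (2*π) d, ← Real.rpow_mul (by positivity)]
          rw [mul_one_div]
      _ = ENNReal.ofReal (max 1 ((2*π) ^ ((d:ℝ) / q.toReal))) *
            (∑' ι : Fin d → ℤ, B ι ^ q.toReal) ^ (1/q.toReal) := mul_comm _ _

lemma lpSeq_top {ι : Type*} (a : ι → ℝ≥0∞) : lpSeq ∞ a = ⨆ j, a j := if_pos rfl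

lemma lpSeq_ne_top {ι : Type*} {p : ℝ≥0∞} (hp : p ≠ ∞) (a : ι → ℝ≥0∞) :
    lpSeq p a = (∑' j, a j ^ p.toReal) ^ (1/p.toReal) := if_neg hp

lemma part2 (d : ℕ) (p q r r₁ : ℝ≥0∞) (hp : 0 < p) (hq : 0 < q) (hr : 0 < r) (hr₁ : 0 < r₁)
    (hr₁le : r₁ ≤ min p (min q r)) (F : Ed d × Ed d → ℂ) (hF : Measurable F) :
    lpSeq q (fun ι : Fin d → ℤ => lpSeq p (fun j : Fin d → ℤ =>
        eLpNorm F r₁ (volume.restrict ((cell d j) ×ˢ (cell2pi d ι)))))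
      ≤ ENNReal.ofReal (max 1 ((2*π) ^ ((d:ℝ) * (1/r₁.toReal - 1/q.toReal)))) *
        lpENN q volume (fun ξ : Ed d => lpSeq p (fun j : Fin d → ℤ =>
          eLpNorm (fun x => F (x, ξ)) r (volume.restrict (cell d j)))) := by
  have hr₁p : r₁ ≤ p := hr₁le.trans (min_le_left _ _)
  have hr₁q : r₁ ≤ q := hr₁le.trans ((min_le_right _ _).trans (min_le_left _ _))
  have hr₁r : r₁ ≤ r := hr₁le.trans ((min_le_right _ _).trans (min_le_right _ _))
  have hCbig : (1:ℝ≥0∞) ≤ ENNReal.ofReal (max 1 ((2*π) ^ ((d:ℝ) * (1/r₁.toReal - 1/q.toReal)))) := by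
    rw [← ENNReal.ofReal_one]
    exact ENNReal.ofReal_le_ofReal (le_max_left _ _)
  have hvolcell : ∀ j : Fin d → ℤ, volume (cell d j) = 1 := fun j => by
    rw [cell_eq_ccell, volume_ccell zero_le_one]; simp
  set a : (Fin d → ℤ) → Ed d → ℝ≥0∞ :=
    fun j ξ => eLpNorm (fun x => F (x, ξ)) r (volume.restrict (cell d j)) with ha_def
  set g : Ed d → ℝ≥0∞ := fun ξ => lpSeq p (fun j => a j ξ) with hg_def
  have hgval : ∀ ξ, g ξ = lpSeq p (fun j => a j ξ) := fun ξ => rfl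
  have hg_meas : Measurable g :=
    measurable_lpSeq_param p fun j => measurable_eLpNorm_param (hvolcell j) r hF
  have hprod : ∀ (j ι : Fin d → ℤ),
      (volume : Measure (Ed d × Ed d)).restrict (cell d j ×ˢ cell2pi d ι) =
      (volume.restrict (cell d j)).prod (volume.restrict (cell2pi d ι)) := fun j ι => by
    rw [Measure.volume_eq_prod, Measure.prod_restrict]
  rcases eq_or_ne r₁ ∞ with rfl | hr₁top
  · -- r₁ = ∞ forces p = q = r = ∞
    have hptop : p = ∞ := top_le_iff.mp hr₁p
    have hqtop : q = ∞ := top_le_iff.mp hr₁q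
    have hrtop : r = ∞ := top_le_iff.mp hr₁r
    subst hptop; subst hqtop; subst hrtop
    rw [lpENN, if_pos rfl]
    set M := essSup g volume with hM_def
    simp only [lpSeq_top]
    refine le_trans (iSup_le fun ι => iSup_le fun j => ?_) (le_mul_of_one_le_left' hCbig)
    rw [hprod j ι, eLpNorm_exponent_top, eLpNormEssSup]
    have hSm : MeasurableSet {z : Ed d × Ed d | M < (‖F z‖₊ : ℝ≥0∞)} :=
      measurableSet_lt measurable_const hF.nnnorm.coe_nnreal_ennreal
    refine essSup_le_of_ae_le _ ?_
    rw [Filter.EventuallyLE, ae_iff]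
    have hset : {z : Ed d × Ed d | ¬ (‖F z‖₊ : ℝ≥0∞) ≤ M} =
        {z : Ed d × Ed d | M < (‖F z‖₊ : ℝ≥0∞)} := by
      ext z; simp [not_le]
    rw [show {a : Ed d × Ed d | ¬‖F a‖ₑ ≤ M} = _ from hset, Measure.prod_apply_symm hSm]
    have hae : (fun ξ => volume.restrict (cell d j)
          ((fun x => (x, ξ)) ⁻¹' {z : Ed d × Ed d | M < (‖F z‖₊ : ℝ≥0∞)}))
        =ᵐ[volume.restrict (cell2pi d ι)] (fun _ => 0) := by
      filter_upwards [ae_restrict_of_ae (ENNReal.ae_le_essSup g)] with ξ hξ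
      have haj : a j ξ ≤ M := by
        refine le_trans ?_ hξ
        rw [hgval ξ, lpSeq_top]
        exact le_iSup (fun j => a j ξ) j
      have haj2 : eLpNorm (fun x => F (x, ξ)) ⊤ (volume.restrict (cell d j)) ≤ M := haj
      have haj' : essSup (fun x => (‖F (x, ξ)‖₊ : ℝ≥0∞)) (volume.restrict (cell d j)) ≤ M := by
        rwa [eLpNorm_exponent_top, eLpNormEssSup] at haj2
      have h0 : volume.restrict (cell d j)
          {x | essSup (fun x => (‖F (x, ξ)‖₊ : ℝ≥0∞)) (volume.restrict (cell d j))
            < (‖F (x, ξ)‖₊ : ℝ≥0∞)} = 0 := by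
        have h1 := ENNReal.ae_le_essSup (μ := volume.restrict (cell d j))
          (fun x => (‖F (x, ξ)‖₊ : ℝ≥0∞))
        rw [ae_iff] at h1
        convert h1 using 2
        ext x; simp [not_le]
      refine measure_mono_null ?_ h0
      intro x hx
      simp only [Set.mem_preimage, Set.mem_setOf_eq] at hx ⊢
      exact lt_of_le_of_lt haj' hx
    rw [lintegral_congr_ae hae, lintegral_zero]
  · -- main case r₁ < ∞
    set t := r₁.toReal with ht_def
    have ht : 0 < t := ENNReal.toReal_pos hr₁.ne' hr₁top
    set u : (Fin d → ℤ) → Ed d → ℝ≥0∞ :=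
      fun j ξ => ∫⁻ x in cell d j, (‖F (x, ξ)‖₊ : ℝ≥0∞) ^ t with hu_def
    have hu_meas : ∀ j, Measurable (u j) := fun j =>
      Measurable.lintegral_prod_left ((hF.nnnorm.coe_nnreal_ennreal).pow_const t)
    have key1 : ∀ j ι : Fin d → ℤ,
        eLpNorm F r₁ (volume.restrict (cell d j ×ˢ cell2pi d ι)) =
          (∫⁻ ξ in cell2pi d ι, u j ξ) ^ (1/t) := by
      intro j ι
      rw [eLpNorm_eq_lintegral_rpow_enorm_toReal hr₁.ne' hr₁top, hprod j ι]
      congr 1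
      exact lintegral_prod_symm _ ((hF.nnnorm.coe_nnreal_ennreal).pow_const t).aemeasurable
    have key2 : ∀ (j : Fin d → ℤ) (ξ : Ed d), u j ξ ≤ a j ξ ^ t := by
      intro j ξ
      have e1 : eLpNorm (fun x => F (x, ξ)) r₁ (volume.restrict (cell d j)) = (u j ξ) ^ (1/t) :=
        eLpNorm_eq_lintegral_rpow_enorm_toReal hr₁.ne' hr₁top
      have e2 : eLpNorm (fun x => F (x, ξ)) r₁ (volume.restrict (cell d j)) ≤ a j ξ := by
        have h3 := eLpNorm_le_eLpNorm_mul_rpow_measure_univ (μ := volume.restrict (cell d j))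
          (f := fun x => F (x, ξ)) hr₁r
          ((hF.comp (measurable_id.prodMk measurable_const)).aestronglyMeasurable)
        rwa [Measure.restrict_apply_univ, hvolcell j, ENNReal.one_rpow, mul_one] at h3
      calc u j ξ = ((u j ξ) ^ (1/t)) ^ t := by
            rw [← ENNReal.rpow_mul, one_div_mul_cancel ht.ne', ENNReal.rpow_one]
        _ = (eLpNorm (fun x => F (x, ξ)) r₁ (volume.restrict (cell d j))) ^ t := by rw [e1]
        _ ≤ a j ξ ^ t := ENNReal.rpow_le_rpow e2 ht.le
    set D : (Fin d → ℤ) → ℝ≥0∞ :=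
      fun ι => (∫⁻ ξ in cell2pi d ι, g ξ ^ t) ^ (1/t) with hD_def
    have key3 : ∀ ι : Fin d → ℤ,
        lpSeq p (fun j => eLpNorm F r₁ (volume.restrict (cell d j ×ˢ cell2pi d ι))) ≤ D ι := by
      intro ι
      have hrw : (fun j : Fin d → ℤ =>
          eLpNorm F r₁ (volume.restrict (cell d j ×ˢ cell2pi d ι))) =
          fun j => (∫⁻ ξ in cell2pi d ι, u j ξ) ^ (1/t) := funext fun j => key1 j ι
      rw [hrw]
      rcases eq_or_ne p ∞ with rfl | hptop
      · rw [lpSeq_top]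
        refine iSup_le fun j => ?_
        refine ENNReal.rpow_le_rpow (lintegral_mono fun ξ => ?_) (by positivity)
        refine (key2 j ξ).trans (ENNReal.rpow_le_rpow ?_ ht.le)
        rw [hgval ξ, lpSeq_top]
        exact le_iSup (fun j => a j ξ) j
      · have hp' : 0 < p.toReal := ENNReal.toReal_pos hp.ne' hptop
        have htp : t ≤ p.toReal := ENNReal.toReal_mono hptop hr₁p
        set σ := p.toReal / t with hσ_def
        have hσ : 1 ≤ σ := (one_le_div ht).mpr htp
        rw [lpSeq_ne_top hptop]
        have hrw2 : ∀ j : Fin d → ℤ, ((∫⁻ ξ in cell2pi d ι, u j ξ) ^ (1/t)) ^ p.toReal =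
            (∫⁻ ξ in cell2pi d ι, u j ξ) ^ σ := fun j => by
          rw [← ENNReal.rpow_mul, hσ_def]
          congr 1
          field_simp
        simp only [hrw2]
        have hmink := minkowski_tsum (μ := volume.restrict (cell2pi d ι)) hσ hu_meas
        have hbound : (∫⁻ ξ in cell2pi d ι, (∑' j, u j ξ ^ σ) ^ (1/σ)) ≤
            ∫⁻ ξ in cell2pi d ι, g ξ ^ t := by
          refine lintegral_mono fun ξ => ?_
          have hsum : ∑' j, u j ξ ^ σ ≤ ∑' j, a j ξ ^ p.toReal :=
            ENNReal.tsum_le_tsum fun j => by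
              calc u j ξ ^ σ ≤ (a j ξ ^ t) ^ σ :=
                    ENNReal.rpow_le_rpow (key2 j ξ) (by positivity)
                _ = a j ξ ^ p.toReal := by
                    rw [← ENNReal.rpow_mul, hσ_def]
                    congr 1
                    field_simp
          calc (∑' j, u j ξ ^ σ) ^ (1/σ) ≤ (∑' j, a j ξ ^ p.toReal) ^ (1/σ) :=
                ENNReal.rpow_le_rpow hsum (by positivity)
            _ = ((∑' j, a j ξ ^ p.toReal) ^ (1/p.toReal)) ^ t := by
                rw [← ENNReal.rpow_mul, hσ_def]
                congr 1
                field_simp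
            _ = g ξ ^ t := by rw [hgval ξ, lpSeq_ne_top hptop]
        calc (∑' j, (∫⁻ ξ in cell2pi d ι, u j ξ) ^ σ) ^ (1/p.toReal)
            = ((∑' j, (∫⁻ ξ in cell2pi d ι, u j ξ) ^ σ) ^ (1/σ)) ^ (1/t) := by
              rw [← ENNReal.rpow_mul, hσ_def]
              congr 1
              field_simp
          _ ≤ (∫⁻ ξ in cell2pi d ι, (∑' j, u j ξ ^ σ) ^ (1/σ)) ^ (1/t) :=
              ENNReal.rpow_le_rpow hmink (by positivity)
          _ ≤ (∫⁻ ξ in cell2pi d ι, g ξ ^ t) ^ (1/t) :=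
              ENNReal.rpow_le_rpow hbound (by positivity)
    refine le_trans (lpSeq_mono' q key3) ?_
    -- now prove : lpSeq q D ≤ C * lpENN q volume g
    rcases eq_or_ne q ∞ with rfl | hqtop
    · rw [lpENN, if_pos rfl, lpSeq_top]
      set M := essSup g volume with hM_def
      have hDle : ∀ ι : Fin d → ℤ, D ι ≤ M * ENNReal.ofReal ((2*π) ^ ((d:ℝ) * (1/t))) := by
        intro ι
        have hstep : ∫⁻ ξ in cell2pi d ι, g ξ ^ t ≤ M ^ t * ENNReal.ofReal ((2*π)^d) := by
          calc ∫⁻ ξ in cell2pi d ι, g ξ ^ t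
              ≤ ∫⁻ _ in cell2pi d ι, M ^ t := lintegral_mono_ae
                ((ae_restrict_of_ae (ENNReal.ae_le_essSup g)).mono fun ξ hξ =>
                  ENNReal.rpow_le_rpow hξ ht.le)
            _ = M ^ t * volume (cell2pi d ι) := setLIntegral_const _ _
            _ = M ^ t * ENNReal.ofReal ((2*π)^d) := by
                rw [cell2pi_eq_ccell, volume_ccell Real.two_pi_pos.le]
        calc D ι ≤ (M ^ t * ENNReal.ofReal ((2*π)^d)) ^ (1/t) :=
              ENNReal.rpow_le_rpow hstep (by positivity)
          _ = M * (ENNReal.ofReal ((2*π)^d)) ^ (1/t) := by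
              rw [ENNReal.mul_rpow_of_nonneg _ _ (by positivity), ← ENNReal.rpow_mul,
                mul_one_div_cancel ht.ne', ENNReal.rpow_one]
          _ = M * ENNReal.ofReal ((2*π) ^ ((d:ℝ) * (1/t))) := by
              rw [ENNReal.ofReal_rpow_of_pos (by positivity)]
              congr 2
              rw [← Real.rpow_natCast (2*π) d, ← Real.rpow_mul (by positivity)]
      refine le_trans (iSup_le fun ι => hDle ι) ?_
      rw [mul_comm]
      refine mul_le_mul_left ?_ _
      refine ENNReal.ofReal_le_ofReal (le_max_of_le_right (le_of_eq ?_))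
      simp [ENNReal.toReal_top]
    · have hq' : 0 < q.toReal := ENNReal.toReal_pos hq.ne' hqtop
      have htq : t ≤ q.toReal := ENNReal.toReal_mono hqtop hr₁q
      set σ₂ := q.toReal / t with hσ₂_def
      have hσ₂ : 1 ≤ σ₂ := (one_le_div ht).mpr htq
      rw [lpSeq_ne_top hqtop, lpENN, if_neg hqtop]
      have hDpow : ∀ ι : Fin d → ℤ, D ι ^ q.toReal = (∫⁻ ξ in cell2pi d ι, g ξ ^ t) ^ σ₂ :=
        fun ι => by
          rw [hD_def, ← ENNReal.rpow_mul, hσ₂_def]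
          congr 1
          field_simp
      have hstep : ∀ ι : Fin d → ℤ, (∫⁻ ξ in cell2pi d ι, g ξ ^ t) ^ σ₂ ≤
          (∫⁻ ξ in cell2pi d ι, g ξ ^ q.toReal) * ENNReal.ofReal ((2*π)^d) ^ (σ₂ - 1) := by
        intro ι
        rcases eq_or_lt_of_le hσ₂ with h1 | h1
        · have htt : t = q.toReal := by
            rw [hσ₂_def, eq_div_iff ht.ne'] at h1
            linarith [h1]
          rw [← h1, ENNReal.rpow_one, sub_self, ENNReal.rpow_zero, mul_one, htt]
        · set σ₂' := Real.conjExponent σ₂ with hσ₂'_def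
          have hconj : σ₂.HolderConjugate σ₂' := Real.HolderConjugate.conjExponent h1
          have hσ₂pos : (0:ℝ) < σ₂ := by linarith
          have hσ₂'pos : (0:ℝ) < σ₂' := hconj.symm.pos
          have hH := ENNReal.lintegral_mul_le_Lp_mul_Lq (volume.restrict (cell2pi d ι)) hconj
            (f := fun ξ => g ξ ^ t) (g := fun _ => (1:ℝ≥0∞))
            (hg_meas.pow_const t).aemeasurable aemeasurable_const
          simp only [Pi.mul_apply, mul_one] at hH
          -- hH : ∫ g^t ≤ (∫ (g^t)^σ₂)^(1/σ₂) * (∫ 1^σ₂')^(1/σ₂')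
          have hg1 : ∀ ξ : Ed d, (g ξ ^ t) ^ σ₂ = g ξ ^ q.toReal := fun ξ => by
            rw [← ENNReal.rpow_mul, hσ₂_def]
            congr 1
            field_simp
          simp only [hg1, ENNReal.one_rpow] at hH
          rw [setLIntegral_one, cell2pi_eq_ccell, volume_ccell Real.two_pi_pos.le] at hH
          calc (∫⁻ ξ in cell2pi d ι, g ξ ^ t) ^ σ₂
              ≤ ((∫⁻ ξ in cell2pi d ι, g ξ ^ q.toReal) ^ (1/σ₂) *
                  ENNReal.ofReal ((2*π)^d) ^ (1/σ₂')) ^ σ₂ :=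
                ENNReal.rpow_le_rpow hH hσ₂pos.le
            _ = (∫⁻ ξ in cell2pi d ι, g ξ ^ q.toReal) *
                  ENNReal.ofReal ((2*π)^d) ^ (σ₂ - 1) := by
                rw [ENNReal.mul_rpow_of_nonneg _ _ hσ₂pos.le, ← ENNReal.rpow_mul,
                  ← ENNReal.rpow_mul, one_div_mul_cancel hσ₂pos.ne', ENNReal.rpow_one]
                congr 2
                rw [hσ₂'_def, Real.conjExponent]
                field_simp
      calc (∑' ι : Fin d → ℤ, D ι ^ q.toReal) ^ (1/q.toReal)
          ≤ ((∑' ι : Fin d → ℤ, ∫⁻ ξ in cell2pi d ι, g ξ ^ q.toReal) *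
              ENNReal.ofReal ((2*π)^d) ^ (σ₂ - 1)) ^ (1/q.toReal) := by
            rw [← ENNReal.tsum_mul_right]
            refine ENNReal.rpow_le_rpow (ENNReal.tsum_le_tsum fun ι => ?_) (by positivity)
            rw [hDpow ι]
            exact hstep ι
        _ = ((∫⁻ ξ, g ξ ^ q.toReal) * ENNReal.ofReal ((2*π)^d) ^ (σ₂ - 1)) ^ (1/q.toReal) := by
            congr 2
            simp only [cell2pi_eq_ccell]
            exact (lintegral_eq_tsum Real.two_pi_pos _).symm
        _ = (∫⁻ ξ, g ξ ^ q.toReal) ^ (1/q.toReal) *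
              (ENNReal.ofReal ((2*π)^d) ^ (σ₂ - 1)) ^ (1/q.toReal) :=
            ENNReal.mul_rpow_of_nonneg _ _ (by positivity)
        _ ≤ (∫⁻ ξ, g ξ ^ q.toReal) ^ (1/q.toReal) *
              ENNReal.ofReal (max 1 ((2*π) ^ ((d:ℝ) * (1/t - 1/q.toReal)))) := by
            refine mul_le_mul_right ?_ _
            rw [← ENNReal.rpow_mul, ENNReal.ofReal_rpow_of_pos (by positivity)]
            refine ENNReal.ofReal_le_ofReal (le_max_of_le_right (le_of_eq ?_))
            rw [← Real.rpow_natCast (2*π) d, ← Real.rpow_mul (by positivity)]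
            congr 1
            rw [hσ₂_def]
            field_simp
        _ = ENNReal.ofReal (max 1 ((2*π) ^ ((d:ℝ) * (1/t - 1/q.toReal)))) *
              (∫⁻ ξ, g ξ ^ q.toReal) ^ (1/q.toReal) := mul_comm _ _

end Stmt11Aux

/-- comparison of Wiener amalgam quasi-norms `𝖶^{r,∞}(ℓ^{p,q})`,
`𝖶^r_1(ℓ^p, L^q)` and `𝖶^{r₁}(ℓ^{p,q})` on the lattice `ℤ^d × 2πℤ^d`. -/
theorem stmt11 (d : ℕ) (hd : 1 ≤ d) (p q r r₁ : ℝ≥0∞)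
    (hp : 0 < p) (hq : 0 < q) (hr : 0 < r) (hr₁ : 0 < r₁) (hr₁le : r₁ ≤ min p (min q r)) :
    ∃ C₁ C₂ : ℝ, 0 < C₁ ∧ 0 < C₂ ∧
      ∀ F : Ed d × Ed d → ℂ, Measurable F →
        lpENN q volume (fun ξ : Ed d => lpSeq p (fun j : Fin d → ℤ =>
            eLpNorm (fun x => F (x, ξ)) r (volume.restrict (cell d j))))
          ≤ ENNReal.ofReal C₁ *
            lpSeq q (fun ι : Fin d → ℤ => lpSeq p (fun j : Fin d → ℤ =>
              essSup (fun ξ : Ed d => eLpNorm (fun x => F (x, ξ)) r (volume.restrict (cell d j)))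
                (volume.restrict (cell2pi d ι)))) ∧
        lpSeq q (fun ι : Fin d → ℤ => lpSeq p (fun j : Fin d → ℤ =>
            eLpNorm F r₁ (volume.restrict ((cell d j) ×ˢ (cell2pi d ι)))))
          ≤ ENNReal.ofReal C₂ *
            lpENN q volume (fun ξ : Ed d => lpSeq p (fun j : Fin d → ℤ =>
              eLpNorm (fun x => F (x, ξ)) r (volume.restrict (cell d j)))) := by
  refine ⟨max 1 ((2*π) ^ ((d:ℝ) / q.toReal)),
    max 1 ((2*π) ^ ((d:ℝ) * (1/r₁.toReal - 1/q.toReal))), ?_, ?_, ?_⟩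
  · exact lt_of_lt_of_le one_pos (le_max_left _ _)
  · exact lt_of_lt_of_le one_pos (le_max_left _ _)
  · intro F hF
    exact ⟨Stmt11Aux.part1 d p q r hq F,
      Stmt11Aux.part2 d p q r r₁ hp hq hr hr₁ hr₁le F hF⟩

end
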